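/- Suppose Assumption 1 holds, β ∈ (0,1), m > 0, and define Ψ(v,λ) = v·(1 − β(λΦ(v) + 1 − λ)) − βλ·∫_v^∞ z dΦ(z) for v > 0 and λ > 0. Then: (i) for each λ > 0 there exists a unique v(λ) > 0 with Ψ(v(λ), λ) = 0; (ii) the map λ ↦ v(λ) is strictly increasing; (iii) v(λ̄) = 1/m, so that m·v(λ) > 1 if and only if λ > λ̄. In particular, if λ > λ̄ there exists a unique growth rate G = m·v(λ) > 1 satisfying (G/m)·(1 − β(λΦ(G/m) + 1 − λ)) = βλ·∫_{G/m}^∞ z dΦ(z). (Proposition 2, part 2: unique long-run growth rate, exceeding 1 exactly above the leverage threshold.) -/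

import Mathlib

open Filter Topology MeasureTheory

/-- **Assumption 1.** `Φ` (the law `μ` of productivity) is an absolutely continuous
cdf on `[0,∞)` with `Φ(z) < 1` for all `z` and a finite mean. -/
structure Assumption1 (μ : Measure ℝ) : Prop where
  prob : IsProbabilityMeasure μ
  supp : μ (Set.Iio 0) = 0
  absCont : μ ≪ MeasureTheory.volume
  lt_one : ∀ z : ℝ, μ (Set.Iic z) < 1
  finite_mean : Integrable id μ

/-- The cdf `Φ` of the productivity distribution `μ`. -/
noncomputable def Phi (μ : Measure ℝ) (z : ℝ) : ℝ := (μ (Set.Iic z)).toReal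

/-- **Assumption 2.** `F` is homogeneous of degree one, concave, continuously
differentiable with positive marginal products `FK`, `FX`, and
`F(K,1)/K → m`, `F_K(K,1) → m` as `K → ∞` with `m > 0`. -/
structure Assumption2 (F FK FX : ℝ → ℝ → ℝ) (m : ℝ) : Prop where
  pos : ∀ K X : ℝ, 0 < K → 0 < X → 0 < F K X
  homog : ∀ c K X : ℝ, 0 < c → 0 < K → 0 < X → F (c * K) (c * X) = c * F K X
  concave : ConcaveOn ℝ (Set.Ioi 0 ×ˢ Set.Ioi 0) (fun p : ℝ × ℝ => F p.1 p.2)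
  hFK : ∀ K X : ℝ, 0 < K → 0 < X → HasDerivAt (fun k => F k X) (FK K X) K
  hFX : ∀ K X : ℝ, 0 < K → 0 < X → HasDerivAt (fun x => F K x) (FX K X) X
  FK_pos : ∀ K X : ℝ, 0 < K → 0 < X → 0 < FK K X
  FX_pos : ∀ K X : ℝ, 0 < K → 0 < X → 0 < FX K X
  FK_cont : ContinuousOn (fun p : ℝ × ℝ => FK p.1 p.2) (Set.Ioi 0 ×ˢ Set.Ioi 0)
  FX_cont : ContinuousOn (fun p : ℝ × ℝ => FX p.1 p.2) (Set.Ioi 0 ×ˢ Set.Ioi 0)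
  m_pos : 0 < m
  lim_avg : Filter.Tendsto (fun K => F K 1 / K) Filter.atTop (nhds m)
  lim_FK : Filter.Tendsto (fun K => FK K 1) Filter.atTop (nhds m)

/-- The leverage threshold `λ̄ = ((1−β)/β)·(∫ max{mz−1, 0} dΦ(z))⁻¹`. -/
noncomputable def lamBar (β m : ℝ) (μ : Measure ℝ) : ℝ :=
  ((1 - β) / β) * (∫ z, max (m * z - 1) 0 ∂μ)⁻¹

/-- Aggregate wealth `W(K, z̄)` as a function of capital and the investment threshold. -/
noncomputable def Wfun (μ : Measure ℝ) (β lam : ℝ) (F : ℝ → ℝ → ℝ) (K zb : ℝ) : ℝ :=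
  F K 1 / (1 - β * (lam * Phi μ zb + 1 - lam))

/-- Land price `P(K, z̄)` as a function of capital and the investment threshold. -/
noncomputable def Pfun (μ : Measure ℝ) (β lam : ℝ) (F : ℝ → ℝ → ℝ) (K zb : ℝ) : ℝ :=
  β * (lam * Phi μ zb + 1 - lam) * F K 1 / (1 - β * (lam * Phi μ zb + 1 - lam))

/-- `Ψ(v, λ) = v·(1 − β(λΦ(v) + 1 − λ)) − βλ·∫_v^∞ z dΦ(z)`. -/
noncomputable def Psi (μ : Measure ℝ) (β : ℝ) (v lam : ℝ) : ℝ :=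
  v * (1 - β * (lam * Phi μ v + 1 - lam)) - β * lam * ∫ z in Set.Ioi v, z ∂μ

/-- **Proposition 2, part 2.** For each `λ > 0` the equation `Ψ(v, λ) = 0` has a unique
positive root `v(λ)`; the map `λ ↦ v(λ)` is strictly increasing; `v(λ̄) = 1/m`, so
`m·v(λ) > 1` iff `λ > λ̄`. In particular, for `λ > λ̄` there is a unique growth rate
`G > 1` solving `(G/m)(1 − β(λΦ(G/m) + 1 − λ)) = βλ·∫_{G/m}^∞ z dΦ(z)`. -/
noncomputable def gfun (μ : Measure ℝ) (v : ℝ) : ℝ := ∫ z, max (z - v) 0 ∂μ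

variable {μ : Measure ℝ}

lemma gfun_int (hμ : Assumption1 μ) (v : ℝ) :
    Integrable (fun z => max (z - v) 0) μ := by
  haveI := hμ.prob
  refine Integrable.mono' (hμ.finite_mean.abs.add (integrable_const |v|))
    ((measurable_id.sub_const v).max measurable_const).aestronglyMeasurable
    (Filter.Eventually.of_forall fun z => ?_)
  have h1 : (0:ℝ) ≤ max (z - v) 0 := le_max_right _ _
  have h2 : max (z - v) 0 ≤ |z - v| := max_le (le_abs_self _) (abs_nonneg _)
  have h3 : |z - v| ≤ |z| + |v| := abs_sub _ _
  simp only [Real.norm_eq_abs, Pi.add_apply, Pi.abs_apply, id]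
  rw [abs_of_nonneg h1]
  linarith

lemma gfun_anti (hμ : Assumption1 μ) : Antitone (gfun μ) := by
  intro a b hab
  exact integral_mono (gfun_int hμ b) (gfun_int hμ a)
    (fun z => max_le_max (by linarith) le_rfl)

lemma gfun_cont (hμ : Assumption1 μ) : Continuous (gfun μ) := by
  haveI := hμ.prob
  refine (LipschitzWith.of_dist_le_mul (K := 1) fun a b => ?_).continuous
  rw [Real.dist_eq, Real.dist_eq, NNReal.coe_one, one_mul]
  have hint := (gfun_int hμ a).sub (gfun_int hμ b)
  calc |gfun μ a - gfun μ b|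
      = |∫ z, (max (z - a) 0 - max (z - b) 0) ∂μ| := by
        rw [integral_sub (gfun_int hμ a) (gfun_int hμ b)]; rfl
    _ ≤ ∫ z, |max (z - a) 0 - max (z - b) 0| ∂μ := by
        simpa [Real.norm_eq_abs] using norm_integral_le_integral_norm
          (fun z => max (z - a) 0 - max (z - b) 0) (μ := μ)
    _ ≤ ∫ _z, |a - b| ∂μ := by
        refine integral_mono hint.abs (integrable_const _) fun z => ?_
        calc |max (z - a) 0 - max (z - b) 0| ≤ |(z - a) - (z - b)| :=
              abs_max_sub_max_le_abs _ _ _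
          _ = |a - b| := by rw [show (z - a) - (z - b) = -(a - b) by ring, abs_neg]
    _ = |a - b| := by simp

lemma toReal_Ioi (hμ : Assumption1 μ) (v : ℝ) :
    (μ (Set.Ioi v)).toReal = 1 - Phi μ v := by
  haveI := hμ.prob
  have : μ (Set.Ioi v) = 1 - μ (Set.Iic v) := by
    rw [← Set.compl_Iic, measure_compl measurableSet_Iic (measure_ne_top μ _), measure_univ]
  rw [this, ENNReal.toReal_sub_of_le (hμ.lt_one v).le ENNReal.one_ne_top, ENNReal.toReal_one, Phi]

lemma gfun_eq (hμ : Assumption1 μ) (v : ℝ) :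
    gfun μ v = (∫ z in Set.Ioi v, z ∂μ) - v * (1 - Phi μ v) := by
  haveI := hμ.prob
  have hsplit := integral_add_compl (s := Set.Iic v) measurableSet_Iic (gfun_int hμ v)
  rw [Set.compl_Iic] at hsplit
  have h0 : ∫ z in Set.Iic v, max (z - v) 0 ∂μ = 0 := by
    rw [setIntegral_congr_fun measurableSet_Iic
      (g := fun _ => (0:ℝ)) (fun z hz => max_eq_right (by simp at hz; linarith))]
    simp
  have h1 : ∫ z in Set.Ioi v, max (z - v) 0 ∂μ = ∫ z in Set.Ioi v, (z - v) ∂μ :=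
    setIntegral_congr_fun measurableSet_Ioi
      (fun z hz => max_eq_left (by simp at hz; linarith))
  have h2 : ∫ z in Set.Ioi v, (z - v) ∂μ
      = (∫ z in Set.Ioi v, z ∂μ) - v * (1 - Phi μ v) := by
    have hi : IntegrableOn (fun z : ℝ => z) (Set.Ioi v) μ := hμ.finite_mean.integrableOn
    rw [integral_sub hi (integrable_const _), integral_const,
      Measure.real, Measure.restrict_apply_univ, toReal_Ioi hμ, smul_eq_mul, mul_comm]
  rw [gfun, ← hsplit, h0, zero_add, h1, h2]

lemma psi_eq (hμ : Assumption1 μ) (β v lam : ℝ) :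
    Psi μ β v lam = (1 - β) * v - β * lam * gfun μ v := by
  rw [Psi, gfun_eq hμ v]; ring

lemma gfun_pos (hμ : Assumption1 μ) (v : ℝ) : 0 < gfun μ v := by
  haveI := hμ.prob
  have hs : (0:ℝ) < (μ (Set.Ioi (v+1))).toReal := by
    rw [toReal_Ioi hμ (v+1)]
    have : Phi μ (v+1) < 1 := by
      rw [Phi, show (1:ℝ) = ENNReal.toReal 1 by simp]
      exact ENNReal.toReal_strict_mono ENNReal.one_ne_top (hμ.lt_one _)
    linarith
  have h2 : 1 * (μ (Set.Ioi (v+1))).toReal ≤ ∫ z in Set.Ioi (v+1), max (z - v) 0 ∂μ := by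
    rw [show 1 * (μ (Set.Ioi (v+1))).toReal = μ.real (Set.Ioi (v+1)) • (1:ℝ) by
      rw [smul_eq_mul, mul_comm]; rfl]
    refine setIntegral_ge_of_const_le measurableSet_Ioi (measure_ne_top μ _)
      (fun z hz => ?_) (gfun_int hμ v).integrableOn
    simp only [Set.mem_Ioi] at hz
    rw [max_eq_left (by linarith)]; linarith
  have h3 : ∫ z in Set.Ioi (v+1), max (z - v) 0 ∂μ ≤ gfun μ v :=
    setIntegral_le_integral (gfun_int hμ v)
      (Filter.Eventually.of_forall fun z => le_max_right _ _)
  linarith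

lemma intmax_eq (hμ : Assumption1 μ) {m : ℝ} (hm : 0 < m) :
    ∫ z, max (m * z - 1) 0 ∂μ = m * gfun μ (1/m) := by
  have hpt : ∀ z : ℝ, max (m * z - 1) 0 = m * max (z - 1/m) 0 := by
    intro z
    rw [mul_max_of_nonneg _ _ hm.le, mul_zero]
    congr 1
    field_simp
  simp only [hpt, gfun, integral_const_mul]

theorem prop2_growth_rate
    (μ : Measure ℝ) (hμ : Assumption1 μ)
    (β m : ℝ) (hβ : β ∈ Set.Ioo (0 : ℝ) 1) (hm : 0 < m) :
    ∃ v : ℝ → ℝ,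
      (∀ lam : ℝ, 0 < lam → 0 < v lam ∧ Psi μ β (v lam) lam = 0 ∧
        ∀ v' : ℝ, 0 < v' → Psi μ β v' lam = 0 → v' = v lam) ∧
      StrictMonoOn v (Set.Ioi 0) ∧
      v (lamBar β m μ) = 1 / m ∧
      (∀ lam : ℝ, 0 < lam → (1 < m * v lam ↔ lamBar β m μ < lam)) ∧
      (∀ lam : ℝ, lamBar β m μ < lam →
        ∃! G : ℝ, 1 < G ∧
          (G / m) * (1 - β * (lam * Phi μ (G / m) + 1 - lam)) =
            β * lam * ∫ z in Set.Ioi (G / m), z ∂μ) := by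
  haveI := hμ.prob
  obtain ⟨hβ0, hβ1⟩ := hβ
  have hpsi : ∀ w lam : ℝ, Psi μ β w lam = (1 - β) * w - β * lam * gfun μ w :=
    fun w lam => psi_eq hμ β w lam
  -- strict monotonicity of Ψ(·, lam)
  have hmono : ∀ lam : ℝ, 0 < lam → StrictMono (fun w => Psi μ β w lam) := by
    intro lam hlam a b hab
    simp only [hpsi]
    have h1 : (1 - β) * a < (1 - β) * b := by nlinarith
    have h2 : gfun μ b ≤ gfun μ a := gfun_anti hμ hab.le
    have h3 : β * lam * gfun μ b ≤ β * lam * gfun μ a :=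
      mul_le_mul_of_nonneg_left h2 (mul_pos hβ0 hlam).le
    linarith
  -- existence of a positive root
  have hex : ∀ lam : ℝ, 0 < lam → ∃ v0 : ℝ, 0 < v0 ∧ Psi μ β v0 lam = 0 := by
    intro lam hlam
    have hcont : Continuous fun w => Psi μ β w lam := by
      simp only [hpsi]
      exact (continuous_const.mul continuous_id).sub (continuous_const.mul (gfun_cont hμ))
    have hg1 : 0 < gfun μ 1 := gfun_pos hμ 1
    have hg0 : 0 < gfun μ 0 := gfun_pos hμ 0
    set a := min 1 (β * lam * gfun μ 1 / (2 * (1 - β))) with ha_def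
    have ha0 : 0 < a := lt_min one_pos
      (div_pos (mul_pos (mul_pos hβ0 hlam) hg1) (by linarith))
    have hga : gfun μ 1 ≤ gfun μ a := gfun_anti hμ (min_le_left _ _)
    have hPa : Psi μ β a lam < 0 := by
      rw [hpsi]
      have h1 : (1 - β) * a ≤ (1 - β) * (β * lam * gfun μ 1 / (2 * (1 - β))) :=
        mul_le_mul_of_nonneg_left (min_le_right _ _) (by linarith)
      have hne : (1:ℝ) - β ≠ 0 := by linarith
      have h2 : (1 - β) * (β * lam * gfun μ 1 / (2 * (1 - β))) = β * lam * gfun μ 1 / 2 := by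
        field_simp
      have h3 : β * lam * gfun μ 1 ≤ β * lam * gfun μ a :=
        mul_le_mul_of_nonneg_left hga (mul_pos hβ0 hlam).le
      have h4 : 0 < β * lam * gfun μ 1 := mul_pos (mul_pos hβ0 hlam) hg1
      linarith
    set b := max 1 ((β * lam * gfun μ 0 + 1) / (1 - β)) with hb_def
    have hb1 : (1:ℝ) ≤ b := le_max_left _ _
    have hgb : gfun μ b ≤ gfun μ 0 := gfun_anti hμ (by linarith)
    have hPb : 0 < Psi μ β b lam := by
      rw [hpsi]
      have h1 : (β * lam * gfun μ 0 + 1) / (1 - β) ≤ b := le_max_right _ _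
      have h2 : β * lam * gfun μ 0 + 1 ≤ (1 - β) * b := by
        rw [div_le_iff₀ (by linarith)] at h1; linarith [h1]
      have h3 : β * lam * gfun μ b ≤ β * lam * gfun μ 0 :=
        mul_le_mul_of_nonneg_left hgb (mul_pos hβ0 hlam).le
      linarith
    have hab : a ≤ b := le_trans (min_le_left _ _) hb1
    obtain ⟨v0, hv0mem, hv0⟩ := intermediate_value_Icc hab hcont.continuousOn
      ⟨hPa.le, hPb.le⟩
    exact ⟨v0, lt_of_lt_of_le ha0 hv0mem.1, hv0⟩
  have hex' : ∀ lam : ℝ, ∃ v0 : ℝ, 0 < lam → (0 < v0 ∧ Psi μ β v0 lam = 0) := by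
    intro lam
    by_cases h : 0 < lam
    · obtain ⟨v0, h1, h2⟩ := hex lam h; exact ⟨v0, fun _ => ⟨h1, h2⟩⟩
    · exact ⟨1, fun h' => absurd h' h⟩
  choose v hv using hex'
  have huniq : ∀ lam : ℝ, 0 < lam → ∀ v' : ℝ, 0 < v' → Psi μ β v' lam = 0 → v' = v lam := by
    intro lam hlam v' _ hv'
    exact (hmono lam hlam).injective (by rw [hv', (hv lam hlam).2])
  -- strict monotonicity of v
  have hvmono : StrictMonoOn v (Set.Ioi 0) := by
    intro l1 h1 l2 h2 h12
    simp only [Set.mem_Ioi] at h1 h2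
    by_contra hle
    push_neg at hle
    have hgv : 0 < gfun μ (v l1) := gfun_pos hμ _
    have e1 : Psi μ β (v l1) l1 = 0 := (hv l1 h1).2
    have hneg : Psi μ β (v l1) l2 < 0 := by
      rw [hpsi] at e1 ⊢
      have h3 : β * l1 * gfun μ (v l1) < β * l2 * gfun μ (v l1) :=
        mul_lt_mul_of_pos_right (mul_lt_mul_of_pos_left h12 hβ0) hgv
      linarith
    have hpos : (0:ℝ) ≤ Psi μ β (v l1) l2 := by
      rw [← (hv l2 h2).2]
      exact (hmono l2 h2).monotone hle
    linarith
  -- the threshold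
  have hgm : 0 < gfun μ (1/m) := gfun_pos hμ _
  have hI : ∫ z, max (m * z - 1) 0 ∂μ = m * gfun μ (1/m) := intmax_eq hμ hm
  have hlb_pos : 0 < lamBar β m μ := by
    rw [lamBar, hI]
    exact mul_pos (div_pos (by linarith) hβ0) (inv_pos.mpr (mul_pos hm hgm))
  have hvbar : v (lamBar β m μ) = 1 / m := by
    have hroot : Psi μ β (1/m) (lamBar β m μ) = 0 := by
      rw [hpsi, lamBar, hI]
      field_simp
      ring
    exact (huniq _ hlb_pos (1/m) (by positivity) hroot).symm
  have hiff : ∀ lam : ℝ, 0 < lam → (1 < m * v lam ↔ lamBar β m μ < lam) := by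
    intro lam hlam
    constructor
    · intro h
      by_contra hle
      push_neg at hle
      rcases eq_or_lt_of_le hle with heq | hlt
      · rw [heq, hvbar] at h
        rw [mul_one_div, div_self hm.ne'] at h
        exact lt_irrefl 1 h
      · have := hvmono (Set.mem_Ioi.mpr hlam) (Set.mem_Ioi.mpr hlb_pos) hlt
        rw [hvbar] at this
        have : m * v lam < m * (1/m) := by nlinarith
        rw [mul_one_div, div_self hm.ne'] at this
        linarith
    · intro h
      have := hvmono (Set.mem_Ioi.mpr hlb_pos) (Set.mem_Ioi.mpr hlam) h
      rw [hvbar] at this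
      have h2 : m * (1/m) < m * v lam := by nlinarith
      rw [mul_one_div, div_self hm.ne'] at h2
      linarith
  refine ⟨v, fun lam hlam => ⟨(hv lam hlam).1, (hv lam hlam).2, huniq lam hlam⟩,
    hvmono, hvbar, hiff, ?_⟩
  intro lam hlam'
  have hlam : 0 < lam := lt_trans hlb_pos hlam'
  have hvpos := (hv lam hlam).1
  refine ⟨m * v lam, ⟨(hiff lam hlam).mpr hlam', ?_⟩, ?_⟩
  · have hvm : m * v lam / m = v lam := by field_simp
    rw [hvm]
    have hz := (hv lam hlam).2
    rw [Psi] at hz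
    linarith
  · rintro G ⟨hG1, hGeq⟩
    have hGm : 0 < G / m := div_pos (lt_trans one_pos hG1) hm
    have hz : Psi μ β (G/m) lam = 0 := by rw [Psi]; linarith
    have hGv : G / m = v lam := huniq lam hlam _ hGm hz
    rw [div_eq_iff hm.ne'] at hGv
    rw [hGv]; ring
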